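/- Uniqueness of solutions of the NFME spin-orbit equation: since the right-hand side is C¹ in (θ, θ′), if θ₁, θ₂ : I → ℝ are twice differentiable on an open interval I, both satisfy θ″(t) = TRI(θ(t), t) + TIDE(θ′(t)) for all t ∈ I, and there is t₀ ∈ I with θ₁(t₀) = θ₂(t₀) and θ₁′(t₀) = θ₂′(t₀), then θ₁(t) = θ₂(t) for all t ∈ I. -/

import Mathlib

open Real Set Filter Topology

/-- The function 𝓡(χ) from the NFME model. -/
noncomputable def Rfun (τA α χ : ℝ) : ℝ :=
  χ + χ ^ (1 - α) * τA ^ (-α) * Real.cos (α * Real.pi / 2) * Real.Gamma (α + 1)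

/-- The function 𝓘(χ) from the NFME model. -/
noncomputable def Ifun (τA τM α χ : ℝ) : ℝ :=
  -1 / τM - χ ^ (1 - α) * τA ^ (-α) * Real.sin (α * Real.pi / 2) * Real.Gamma (α + 1)

/-- The function P₂(χ) from the NFME model. -/
noncomputable def P2 (τA τM A2 α χ : ℝ) : ℝ :=
  Ifun τA τM α χ * χ / ((Rfun τA α χ + A2 * χ) ^ 2 + (Ifun τA τM α χ) ^ 2)

/-- The NFME dissipation function f(x) = P₂(|x|)·sgn(x). -/
noncomputable def nfmeF (τA τM A2 α x : ℝ) : ℝ :=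
  P2 τA τM A2 α |x| * Real.sign x

/-- The tidal angular acceleration TIDE(v) = −η Σ_{q=−1}^{7} G_q² f((q+2)n − 2v). -/
noncomputable def TIDE (τA τM A2 α n η : ℝ) (G : ℤ → ℝ) (v : ℝ) : ℝ :=
  -η * ∑ q ∈ Finset.Icc (-1 : ℤ) 7, (G q) ^ 2 * nfmeF τA τM A2 α (((q : ℝ) + 2) * n - 2 * v)

/-- The triaxiality angular acceleration TRI(θ, t) = −ζ Σ_{q=−4}^{6} G_q sin(2θ − (q+2)nt). -/
noncomputable def TRI (n ζ : ℝ) (G : ℤ → ℝ) (θ t : ℝ) : ℝ :=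
  -ζ * ∑ q ∈ Finset.Icc (-4 : ℤ) 6, G q * Real.sin (2 * θ - ((q : ℝ) + 2) * n * t)

noncomputable def csf (τA α : ℝ) : ℝ := τA ^ (-α) * Real.sin (α * Real.pi / 2) * Real.Gamma (α + 1)
noncomputable def ccf (τA α : ℝ) : ℝ := τA ^ (-α) * Real.cos (α * Real.pi / 2) * Real.Gamma (α + 1)

noncomputable def denf (τA τM A2 α x : ℝ) : ℝ :=
  (Rfun τA α |x| + A2 * |x|) ^ 2 + (Ifun τA τM α |x|) ^ 2

noncomputable def Ef (τA τM A2 α x : ℝ) : ℝ :=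
  2*((1+A2)*|x| + ccf τA α * |x|^(1-α))*((1+A2)*|x| + ccf τA α*(1-α)*|x|^(1-α))
  - 2*(csf τA α)*(1-α)*|x|^(1-α)*(-1/τM - csf τA α*|x|^(1-α))

noncomputable def phif (τA τM A2 α x : ℝ) : ℝ :=
  ((-1/τM - csf τA α*(2-α)*|x|^(1-α)) * denf τA τM A2 α x
    - Ifun τA τM α |x| * Ef τA τM A2 α x) / (denf τA τM A2 α x)^2

section basic
variable {τA τM A2 α : ℝ}

lemma csf_pos (hτA : 0 < τA) (hα0 : 0 < α) (hα1 : α < 1) : 0 < csf τA α := by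
  have h1 : 0 < τA ^ (-α) := Real.rpow_pos_of_pos hτA _
  have h2 : 0 < Real.sin (α * Real.pi / 2) := by
    apply Real.sin_pos_of_pos_of_lt_pi
    · positivity
    · nlinarith [Real.pi_pos]
  have h3 : 0 < Real.Gamma (α + 1) := Real.Gamma_pos_of_pos (by linarith)
  exact mul_pos (mul_pos h1 h2) h3

lemma Ifun_neg (hτA : 0 < τA) (hτM : 0 < τM) (hα0 : 0 < α) (hα1 : α < 1) (χ : ℝ) (hχ : 0 ≤ χ) :
    Ifun τA τM α χ ≤ -1/τM := by
  unfold Ifun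
  have h1 : 0 ≤ τA ^ (-α) := (Real.rpow_pos_of_pos hτA _).le
  have h2 : 0 ≤ Real.sin (α * Real.pi / 2) := by
    apply Real.sin_nonneg_of_nonneg_of_le_pi
    · positivity
    · nlinarith [Real.pi_pos]
  have h3 : 0 ≤ Real.Gamma (α + 1) := (Real.Gamma_pos_of_pos (by linarith)).le
  have h4 : 0 ≤ χ ^ (1-α) := Real.rpow_nonneg hχ _
  have h5 : 0 ≤ χ ^ (1-α) * τA ^ (-α) * Real.sin (α * Real.pi / 2) * Real.Gamma (α + 1) :=
    mul_nonneg (mul_nonneg (mul_nonneg h4 h1) h2) h3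
  linarith

lemma denf_pos (hτA : 0 < τA) (hτM : 0 < τM) (hα0 : 0 < α) (hα1 : α < 1) (x : ℝ) :
    0 < denf τA τM A2 α x := by
  have h := Ifun_neg hτA hτM hα0 hα1 (|x|) (abs_nonneg x)
  have hτM' : -1/τM < 0 := by
    rw [neg_div]
    exact neg_neg_of_pos (by positivity)
  have h2 : Ifun τA τM α |x| < 0 := lt_of_le_of_lt h hτM'
  have : 0 < (Ifun τA τM α |x|)^2 := by rw [pow_two]; exact mul_pos_of_neg_of_neg h2 h2
  unfold denf
  positivity

lemma continuous_rpow_abs (hα1 : α < 1) : Continuous (fun x : ℝ => |x| ^ (1-α)) :=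
  continuous_abs.rpow_const (fun x => Or.inr (by linarith))

lemma continuous_Ifun_abs (hα1 : α < 1) : Continuous (fun x : ℝ => Ifun τA τM α |x|) := by
  unfold Ifun
  exact continuous_const.sub
    ((((continuous_rpow_abs hα1).mul continuous_const).mul continuous_const).mul continuous_const)

lemma continuous_denf (hα1 : α < 1) : Continuous (denf τA τM A2 α) := by
  unfold denf Rfun
  apply Continuous.add
  · apply Continuous.pow
    exact (continuous_abs.add
      ((((continuous_rpow_abs hα1).mul continuous_const).mul continuous_const).mul continuous_const)).add
      (continuous_const.mul continuous_abs)
  · exact (continuous_Ifun_abs hα1).pow 2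

lemma continuous_Ef (hα1 : α < 1) : Continuous (Ef τA τM A2 α) := by
  unfold Ef
  have hu := continuous_rpow_abs (α := α) hα1
  have hA : Continuous (fun x : ℝ => (1+A2)*|x| + ccf τA α * |x|^(1-α)) :=
    (continuous_const.mul continuous_abs).add (continuous_const.mul hu)
  have hB : Continuous (fun x : ℝ => (1+A2)*|x| + ccf τA α*(1-α) * |x|^(1-α)) :=
    (continuous_const.mul continuous_abs).add (continuous_const.mul hu)
  exact (((continuous_const.mul hA).mul hB)).sub
    ((continuous_const.mul hu).mul (continuous_const.sub (continuous_const.mul hu)))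

lemma continuous_phif (hτA : 0 < τA) (hτM : 0 < τM) (hα0 : 0 < α) (hα1 : α < 1) :
    Continuous (phif τA τM A2 α) := by
  unfold phif
  apply Continuous.div
  · exact ((continuous_const.sub (continuous_const.mul (continuous_rpow_abs hα1))).mul
      (continuous_denf hα1)).sub ((continuous_Ifun_abs hα1).mul (continuous_Ef hα1))
  · exact (continuous_denf hα1).pow 2
  · intro x
    exact pow_ne_zero 2 (ne_of_gt (denf_pos hτA hτM hα0 hα1 x))

end basic

section rep
variable {τA τM A2 α : ℝ}

lemma nfmeF_eq (x : ℝ) :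
    nfmeF τA τM A2 α x = Ifun τA τM α |x| * x / denf τA τM A2 α x := by
  unfold nfmeF P2 denf
  rcases lt_trichotomy x 0 with h|h|h
  · rw [abs_of_neg h, Real.sign_of_neg h]; ring
  · subst h; simp
  · rw [abs_of_pos h, Real.sign_of_pos h]; ring

lemma denf_neg (x : ℝ) : denf τA τM A2 α (-x) = denf τA τM A2 α x := by
  unfold denf; rw [abs_neg]

lemma phif_neg (x : ℝ) : phif τA τM A2 α (-x) = phif τA τM A2 α x := by
  unfold phif Ef denf; rw [abs_neg]

lemma Fodd (x : ℝ) :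
    Ifun τA τM α |(-x)| * (-x) / denf τA τM A2 α (-x)
      = -(Ifun τA τM α |x| * x / denf τA τM A2 α x) := by
  rw [abs_neg, denf_neg]; ring

end rep

section derivpos
variable {τA τM A2 α : ℝ}

lemma Ifun_csf (χ : ℝ) : Ifun τA τM α χ = -1/τM - χ^(1-α)*csf τA α := by
  unfold Ifun csf; ring

lemma Rfun_ccf (χ : ℝ) : Rfun τA α χ = χ + χ^(1-α)*ccf τA α := by
  unfold Rfun ccf; ring

lemma hasDerivAt_F_pos (hτA : 0 < τA) (hτM : 0 < τM) (hα0 : 0 < α) (hα1 : α < 1)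
    {x : ℝ} (hx : 0 < x) :
    HasDerivAt (fun y : ℝ => Ifun τA τM α |y| * y / denf τA τM A2 α y)
      (phif τA τM A2 α x) x := by
  have hxne : x ≠ 0 := ne_of_gt hx
  have hu : HasDerivAt (fun y : ℝ => y ^ (1-α)) ((1-α) * x ^ (1-α-1)) x :=
    Real.hasDerivAt_rpow_const (Or.inl hxne)
  have hI : HasDerivAt (fun y : ℝ => -1/τM - y^(1-α) * csf τA α)
      (-((1-α) * x ^ (1-α-1) * csf τA α)) x := (hu.mul_const _).const_sub _
  have hN : HasDerivAt (fun y : ℝ => (-1/τM - y^(1-α) * csf τA α) * y)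
      ((-((1-α) * x ^ (1-α-1) * csf τA α)) * x + (-1/τM - x^(1-α) * csf τA α) * 1) x :=
    hI.mul (hasDerivAt_id x)
  have hR : HasDerivAt (fun y : ℝ => y + y^(1-α) * ccf τA α + A2 * y)
      (1 + (1-α) * x ^ (1-α-1) * ccf τA α + A2 * 1) x :=
    ((hasDerivAt_id x).add (hu.mul_const _)).add ((hasDerivAt_id x).const_mul A2)
  have hD : HasDerivAt (fun y : ℝ =>
        (y + y^(1-α) * ccf τA α + A2 * y)^2 + (-1/τM - y^(1-α) * csf τA α)^2)
      ((2:ℕ) * (x + x^(1-α) * ccf τA α + A2 * x)^1 * (1 + (1-α) * x ^ (1-α-1) * ccf τA α + A2 * 1)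
        + (2:ℕ) * (-1/τM - x^(1-α) * csf τA α)^1 * (-((1-α) * x ^ (1-α-1) * csf τA α))) x :=
    (hR.pow 2).add (hI.pow 2)
  have hdenx : denf τA τM A2 α x
      = (x + x^(1-α) * ccf τA α + A2 * x)^2 + (-1/τM - x^(1-α) * csf τA α)^2 := by
    unfold denf
    rw [abs_of_pos hx, Ifun_csf, Rfun_ccf]
  have hDne : ((x + x^(1-α) * ccf τA α + A2 * x)^2 + (-1/τM - x^(1-α) * csf τA α)^2) ≠ 0 := by
    rw [← hdenx]; exact ne_of_gt (denf_pos hτA hτM hα0 hα1 x)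
  have hG := hN.div hD hDne
  have heq : (fun y : ℝ => Ifun τA τM α |y| * y / denf τA τM A2 α y)
      =ᶠ[𝓝 x] (fun y : ℝ => ((-1/τM - y^(1-α) * csf τA α) * y) /
        ((y + y^(1-α) * ccf τA α + A2 * y)^2 + (-1/τM - y^(1-α) * csf τA α)^2)) := by
    filter_upwards [eventually_gt_nhds hx] with y hy
    unfold denf
    rw [abs_of_pos hy, Ifun_csf, Rfun_ccf]
  have hF := hG.congr_of_eventuallyEq heq
  convert hF using 1
  · rfl
  · rfl
  unfold phif Ef denf
  rw [abs_of_pos hx, Ifun_csf, Rfun_ccf]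
  have hpq : x ^ (1-α-1) * x = x ^ (1-α) := by
    calc x ^ (1-α-1) * x = x ^ (1-α-1) * x ^ (1:ℝ) := by rw [Real.rpow_one]
      _ = x ^ ((1-α-1)+1) := (Real.rpow_add hx _ _).symm
      _ = x ^ (1-α) := by rw [show (1-α-1)+(1:ℝ) = 1-α by ring]
  set p := x ^ (1-α) with hp
  set q := x ^ (1-α-1) with hq
  rw [div_eq_div_iff (pow_ne_zero 2 hDne) (pow_ne_zero 2 hDne)]
  linear_combination ((csf τA α*(1-α)*((x + p*ccf τA α + A2*x)^2 + (-1/τM - p*csf τA α)^2)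
    + (-1/τM - p*csf τA α)*(2*ccf τA α*(1-α)*(x + p*ccf τA α + A2*x)
      - 2*csf τA α*(1-α)*(-1/τM - p*csf τA α)))
    * ((x + p*ccf τA α + A2*x)^2 + (-1/τM - p*csf τA α)^2)^2) * hpq

end derivpos

section derivall
variable {τA τM A2 α : ℝ}

lemma hasDerivAt_F_zero (hτA : 0 < τA) (hτM : 0 < τM) (hα0 : 0 < α) (hα1 : α < 1) :
    HasDerivAt (fun y : ℝ => Ifun τA τM α |y| * y / denf τA τM A2 α y)
      (phif τA τM A2 α 0) 0 := by
  have hden : ∀ y : ℝ, denf τA τM A2 α y ≠ 0 :=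
    fun y => ne_of_gt (denf_pos hτA hτM hα0 hα1 y)
  have hcont : Continuous (fun y : ℝ => Ifun τA τM α |y| / denf τA τM A2 α y) :=
    (continuous_Ifun_abs hα1).div (continuous_denf hα1) hden
  have hlim : Tendsto (fun y : ℝ => Ifun τA τM α |y| / denf τA τM A2 α y) (𝓝[≠] (0:ℝ))
      (𝓝 (Ifun τA τM α |(0:ℝ)| / denf τA τM A2 α 0)) :=
    (hcont.tendsto 0).mono_left nhdsWithin_le_nhds
  have hval : Ifun τA τM α |(0:ℝ)| / denf τA τM A2 α 0 = phif τA τM A2 α 0 := by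
    have h0 : (0:ℝ) ^ (1-α) = 0 := Real.zero_rpow (by intro h; linarith [h] : (1-α) ≠ 0)
    unfold phif Ef
    rw [abs_zero, h0]
    unfold Ifun
    rw [h0]
    rw [div_eq_div_iff (hden 0) (pow_ne_zero 2 (hden 0))]
    ring
  rw [hasDerivAt_iff_tendsto_slope]
  rw [hval] at hlim
  apply hlim.congr'
  filter_upwards [self_mem_nhdsWithin] with y hy
  have hy' : y ≠ 0 := hy
  rw [slope_def_field]
  have h00 : Ifun τA τM α |(0:ℝ)| * 0 / denf τA τM A2 α 0 = 0 := by simp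
  rw [h00, sub_zero, sub_zero]
  field_simp

lemma hasDerivAt_F (hτA : 0 < τA) (hτM : 0 < τM) (hα0 : 0 < α) (hα1 : α < 1) (x : ℝ) :
    HasDerivAt (fun y : ℝ => Ifun τA τM α |y| * y / denf τA τM A2 α y)
      (phif τA τM A2 α x) x := by
  rcases lt_trichotomy x 0 with h|h|h
  · have h1 := hasDerivAt_F_pos (A2 := A2) hτA hτM hα0 hα1 (neg_pos.mpr h)
    have h2 : HasDerivAt (fun y : ℝ => Ifun τA τM α |(-y)| * (-y) / denf τA τM A2 α (-y))
        (phif τA τM A2 α (-x) * (-1)) x := h1.comp x (hasDerivAt_neg x)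
    have h3 := h2.neg
    have heqf : (fun y : ℝ => -(Ifun τA τM α |(-y)| * (-y) / denf τA τM A2 α (-y)))
        = fun y : ℝ => Ifun τA τM α |y| * y / denf τA τM A2 α y :=
      funext fun y => by rw [Fodd]; ring
    change HasDerivAt (fun y : ℝ => -(Ifun τA τM α |(-y)| * (-y) / denf τA τM A2 α (-y))) _ x at h3
    rw [heqf] at h3
    convert h3 using 1
    rw [phif_neg]; ring
  · subst h; exact hasDerivAt_F_zero hτA hτM hα0 hα1
  · exact hasDerivAt_F_pos hτA hτM hα0 hα1 h

lemma hasDerivAt_nfmeF (hτA : 0 < τA) (hτM : 0 < τM) (hα0 : 0 < α) (hα1 : α < 1) (x : ℝ) :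
    HasDerivAt (nfmeF τA τM A2 α) (phif τA τM A2 α x) x := by
  have h := hasDerivAt_F (A2 := A2) hτA hτM hα0 hα1 x
  have : (fun y : ℝ => Ifun τA τM α |y| * y / denf τA τM A2 α y) = nfmeF τA τM A2 α :=
    funext fun y => (nfmeF_eq y).symm
  rwa [this] at h

lemma nfmeF_lip (hτA : 0 < τA) (hτM : 0 < τM) (hα0 : 0 < α) (hα1 : α < 1) (M : ℝ) :
    ∃ L : ℝ, 0 ≤ L ∧ ∀ x ∈ Icc (-M) M, ∀ y ∈ Icc (-M) M,
      |nfmeF τA τM A2 α x - nfmeF τA τM A2 α y| ≤ L * |x - y| := by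
  obtain ⟨C, hC⟩ := (isCompact_Icc (a := -M) (b := M)).exists_bound_of_continuousOn
    (continuous_phif (A2 := A2) hτA hτM hα0 hα1).continuousOn
  refine ⟨max C 0, le_max_right _ _, fun x hx y hy => ?_⟩
  have := Convex.norm_image_sub_le_of_norm_hasDerivWithin_le
    (f := nfmeF τA τM A2 α) (f' := phif τA τM A2 α) (C := max C 0) (s := Icc (-M) M)
    (fun z hz => (hasDerivAt_nfmeF hτA hτM hα0 hα1 z).hasDerivWithinAt)
    (fun z hz => le_trans (hC z hz) (le_max_left _ _)) (convex_Icc _ _) hy hx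
  simpa [Real.norm_eq_abs] using this

end derivall

lemma abs_sin_sub_sin (a b : ℝ) : |Real.sin a - Real.sin b| ≤ |a - b| := by
  rw [Real.sin_sub_sin]
  have h1 : |Real.sin ((a - b)/2)| ≤ |(a-b)/2| := Real.abs_sin_le_abs
  have h2 : |Real.cos ((a + b)/2)| ≤ 1 := Real.abs_cos_le_one _
  calc |2 * Real.sin ((a - b)/2) * Real.cos ((a + b)/2)|
      = 2 * |Real.sin ((a - b)/2)| * |Real.cos ((a + b)/2)| := by
        rw [abs_mul, abs_mul, abs_two]
    _ ≤ 2 * |(a-b)/2| * 1 := by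
        apply mul_le_mul _ h2 (abs_nonneg _) (by positivity)
        exact mul_le_mul_of_nonneg_left h1 (by norm_num)
    _ = |a - b| := by rw [abs_div, abs_two]; ring

lemma TRI_lip {n ζ : ℝ} {G : ℤ → ℝ} (hζ : 0 ≤ ζ) (t θ θ' : ℝ) :
    |TRI n ζ G θ t - TRI n ζ G θ' t|
      ≤ (2 * ζ * ∑ q ∈ Finset.Icc (-4 : ℤ) 6, |G q|) * |θ - θ'| := by
  have h : TRI n ζ G θ t - TRI n ζ G θ' t
      = ∑ q ∈ Finset.Icc (-4 : ℤ) 6, (-ζ) * (G q *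
        (Real.sin (2 * θ - ((q : ℝ) + 2) * n * t) - Real.sin (2 * θ' - ((q : ℝ) + 2) * n * t))) := by
    unfold TRI
    rw [Finset.mul_sum, Finset.mul_sum, ← Finset.sum_sub_distrib]
    exact Finset.sum_congr rfl (fun q _ => by ring)
  rw [h]
  refine (Finset.abs_sum_le_sum_abs _ _).trans ?_
  have hterm : ∀ q ∈ Finset.Icc (-4 : ℤ) 6, |(-ζ) * (G q *
        (Real.sin (2 * θ - ((q : ℝ) + 2) * n * t) - Real.sin (2 * θ' - ((q : ℝ) + 2) * n * t)))|
      ≤ ζ * |G q| * (2 * |θ - θ'|) := by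
    intro q _
    rw [abs_mul, abs_mul, abs_neg, abs_of_nonneg hζ, ← mul_assoc]
    have hsin : |Real.sin (2 * θ - ((q : ℝ) + 2) * n * t)
        - Real.sin (2 * θ' - ((q : ℝ) + 2) * n * t)| ≤ 2 * |θ - θ'| := by
      refine (abs_sin_sub_sin _ _).trans (le_of_eq ?_)
      rw [show (2 * θ - ((q : ℝ) + 2) * n * t) - (2 * θ' - ((q : ℝ) + 2) * n * t)
        = 2 * (θ - θ') by ring, abs_mul, abs_two]
    exact mul_le_mul_of_nonneg_left hsin (by positivity)
  refine (Finset.sum_le_sum hterm).trans (le_of_eq ?_)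
  simp only [Finset.sum_mul, Finset.mul_sum]
  exact Finset.sum_congr rfl (fun q _ => by ring)

lemma TIDE_lip {τA τM A2 α n η : ℝ} {G : ℤ → ℝ} (hτA : 0 < τA) (hτM : 0 < τM)
    (hα0 : 0 < α) (hα1 : α < 1) (hn : 0 < n) (hη : 0 ≤ η)
    {ρ L : ℝ} (hρ : 0 ≤ ρ) (hL : 0 ≤ L)
    (hLf : ∀ x ∈ Icc (-(9*n+2*ρ)) (9*n+2*ρ), ∀ y ∈ Icc (-(9*n+2*ρ)) (9*n+2*ρ),
      |nfmeF τA τM A2 α x - nfmeF τA τM A2 α y| ≤ L * |x - y|)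
    (v w : ℝ) (hv : |v| ≤ ρ) (hw : |w| ≤ ρ) :
    |TIDE τA τM A2 α n η G v - TIDE τA τM A2 α n η G w|
      ≤ (η * (∑ q ∈ Finset.Icc (-1 : ℤ) 7, (G q)^2) * (2*L)) * |v - w| := by
  have hmem : ∀ u : ℝ, |u| ≤ ρ → ∀ q ∈ Finset.Icc (-1 : ℤ) 7,
      ((q : ℝ) + 2) * n - 2 * u ∈ Icc (-(9*n+2*ρ)) (9*n+2*ρ) := by
    intro u hu q hq
    rw [Finset.mem_Icc] at hq
    have h1 : (-1 : ℝ) ≤ (q : ℝ) := by exact_mod_cast hq.1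
    have h2 : (q : ℝ) ≤ 7 := by exact_mod_cast hq.2
    have habs : |((q : ℝ) + 2) * n - 2 * u| ≤ 9*n + 2*ρ := by
      calc |((q : ℝ) + 2) * n - 2 * u| ≤ |((q : ℝ) + 2) * n| + |2 * u| := abs_sub _ _
        _ ≤ 9 * n + 2 * ρ := by
            rw [abs_mul, abs_mul]
            have : |(q : ℝ) + 2| ≤ 9 := by rw [abs_le]; constructor <;> linarith
            have h9 : |(q : ℝ) + 2| * |n| ≤ 9 * n := by
              rw [abs_of_pos hn]
              exact mul_le_mul_of_nonneg_right this hn.le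
            have h2u : |(2:ℝ)| * |u| ≤ 2 * ρ := by
              rw [abs_two]
              linarith
            linarith
    exact abs_le.mp habs
  have h : TIDE τA τM A2 α n η G v - TIDE τA τM A2 α n η G w
      = ∑ q ∈ Finset.Icc (-1 : ℤ) 7, (-η) * ((G q)^2 *
        (nfmeF τA τM A2 α (((q : ℝ) + 2) * n - 2 * v)
          - nfmeF τA τM A2 α (((q : ℝ) + 2) * n - 2 * w))) := by
    unfold TIDE
    rw [Finset.mul_sum, Finset.mul_sum, ← Finset.sum_sub_distrib]
    exact Finset.sum_congr rfl (fun q _ => by ring)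
  rw [h]
  refine (Finset.abs_sum_le_sum_abs _ _).trans ?_
  have hterm : ∀ q ∈ Finset.Icc (-1 : ℤ) 7, |(-η) * ((G q)^2 *
        (nfmeF τA τM A2 α (((q : ℝ) + 2) * n - 2 * v)
          - nfmeF τA τM A2 α (((q : ℝ) + 2) * n - 2 * w)))|
      ≤ η * (G q)^2 * (2 * L * |v - w|) := by
    intro q hq
    rw [abs_mul, abs_mul, abs_neg, abs_of_nonneg hη, abs_of_nonneg (sq_nonneg _), ← mul_assoc]
    have hf : |nfmeF τA τM A2 α (((q : ℝ) + 2) * n - 2 * v)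
          - nfmeF τA τM A2 α (((q : ℝ) + 2) * n - 2 * w)| ≤ 2 * L * |v - w| := by
      refine (hLf _ (hmem v hv q hq) _ (hmem w hw q hq)).trans (le_of_eq ?_)
      rw [show (((q : ℝ) + 2) * n - 2 * v) - (((q : ℝ) + 2) * n - 2 * w) = 2 * (w - v) by ring,
        abs_mul, abs_two, abs_sub_comm]
      ring
    have h0 : 0 ≤ η * (G q)^2 := by positivity
    exact mul_le_mul_of_nonneg_left hf h0
  refine (Finset.sum_le_sum hterm).trans (le_of_eq ?_)
  simp only [Finset.sum_mul, Finset.mul_sum]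
  exact Finset.sum_congr rfl (fun q _ => by ring)

/-- Uniqueness of solutions of the NFME spin-orbit equation on an open
interval, given equal initial data. -/
theorem spin_orbit_uniqueness (τA τM A2 α n ζ η : ℝ) (G : ℤ → ℝ)
    (hτA : 0 < τA) (hτM : 0 < τM) (hA2 : 0 < A2) (hα0 : 0 < α) (hα1 : α < 1)
    (hn : 0 < n) (hζ : 0 ≤ ζ) (hη : 0 ≤ η)
    (a b : ℝ) (θ₁ θ₁' θ₂ θ₂' : ℝ → ℝ)
    (h₁ : ∀ t ∈ Set.Ioo a b, HasDerivAt θ₁ (θ₁' t) t)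
    (h₁' : ∀ t ∈ Set.Ioo a b, HasDerivAt θ₁'
      (TRI n ζ G (θ₁ t) t + TIDE τA τM A2 α n η G (θ₁' t)) t)
    (h₂ : ∀ t ∈ Set.Ioo a b, HasDerivAt θ₂ (θ₂' t) t)
    (h₂' : ∀ t ∈ Set.Ioo a b, HasDerivAt θ₂'
      (TRI n ζ G (θ₂ t) t + TIDE τA τM A2 α n η G (θ₂' t)) t)
    (t₀ : ℝ) (ht₀ : t₀ ∈ Set.Ioo a b)
    (hval : θ₁ t₀ = θ₂ t₀) (hval' : θ₁' t₀ = θ₂' t₀) :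
    ∀ t ∈ Set.Ioo a b, θ₁ t = θ₂ t := by
  intro T hT
  have hac : a < min t₀ T := lt_min ht₀.1 hT.1
  have hdb : max t₀ T < b := max_lt ht₀.2 hT.2
  have hcd : min t₀ T ≤ max t₀ T := min_le_max
  have key : ∀ z ∈ Icc ((a + min t₀ T)/2) ((max t₀ T + b)/2), z ∈ Set.Ioo a b :=
    fun z hz => ⟨by linarith [hz.1], by linarith [hz.2]⟩
  have ht₀' : t₀ ∈ Set.Ioo ((a + min t₀ T)/2) ((max t₀ T + b)/2) :=
    ⟨by linarith [min_le_left t₀ T], by linarith [le_max_left t₀ T]⟩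
  have hT' : T ∈ Set.Ioo ((a + min t₀ T)/2) ((max t₀ T + b)/2) :=
    ⟨by linarith [min_le_right t₀ T], by linarith [le_max_right t₀ T]⟩
  have hγ₁c : ContinuousOn (fun t => (θ₁ t, θ₁' t)) (Icc ((a + min t₀ T)/2) ((max t₀ T + b)/2)) :=
    fun t ht => (((h₁ t (key t ht)).continuousAt).prodMk
      ((h₁' t (key t ht)).continuousAt)).continuousWithinAt
  have hγ₂c : ContinuousOn (fun t => (θ₂ t, θ₂' t)) (Icc ((a + min t₀ T)/2) ((max t₀ T + b)/2)) :=
    fun t ht => (((h₂ t (key t ht)).continuousAt).prodMk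
      ((h₂' t (key t ht)).continuousAt)).continuousWithinAt
  obtain ⟨C₁, hC₁⟩ := isCompact_Icc.exists_bound_of_continuousOn hγ₁c
  obtain ⟨C₂, hC₂⟩ := isCompact_Icc.exists_bound_of_continuousOn hγ₂c
  set ρ := max (max C₁ C₂) 0 with hρdef
  have hρ0 : 0 ≤ ρ := le_max_right _ _
  obtain ⟨L, hL0, hLf⟩ := nfmeF_lip (A2 := A2) hτA hτM hα0 hα1 (9*n + 2*ρ)
  set KT := 2 * ζ * ∑ q ∈ Finset.Icc (-4 : ℤ) 6, |G q| with hKTdef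
  set KD := η * (∑ q ∈ Finset.Icc (-1 : ℤ) 7, (G q)^2) * (2*L) with hKDdef
  have hKT : 0 ≤ KT := by
    apply mul_nonneg (by linarith)
    exact Finset.sum_nonneg (fun q _ => abs_nonneg _)
  have hKD : 0 ≤ KD := by
    apply mul_nonneg (mul_nonneg hη (Finset.sum_nonneg (fun q _ => sq_nonneg _)))
    linarith
  have hK : 0 ≤ 1 + KT + KD := by linarith
  have hV : ∀ t : ℝ, LipschitzOnWith (Real.toNNReal (1 + KT + KD))
      (fun p : ℝ × ℝ => (p.2, TRI n ζ G p.1 t + TIDE τA τM A2 α n η G p.2))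
      (Metric.closedBall 0 ρ) := by
    intro t
    rw [lipschitzOnWith_iff_dist_le_mul]
    intro p hp q hq
    rw [Real.coe_toNNReal _ hK]
    have hp2 : |p.2| ≤ ρ :=
      le_trans (norm_snd_le p) (mem_closedBall_zero_iff.mp hp)
    have hq2 : |q.2| ≤ ρ :=
      le_trans (norm_snd_le q) (mem_closedBall_zero_iff.mp hq)
    have e1 : |p.1 - q.1| ≤ dist p q := by
      rw [← Real.dist_eq, Prod.dist_eq]; exact le_max_left _ _
    have e2 : |p.2 - q.2| ≤ dist p q := by
      rw [← Real.dist_eq, Prod.dist_eq]; exact le_max_right _ _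
    have hdnn : 0 ≤ dist p q := dist_nonneg
    rw [Prod.dist_eq]
    apply max_le
    · have : dist p.2 q.2 ≤ dist p q := by
        rw [Prod.dist_eq]; exact le_max_right _ _
      nlinarith
    · rw [Real.dist_eq]
      have htri : |(TRI n ζ G p.1 t + TIDE τA τM A2 α n η G p.2)
            - (TRI n ζ G q.1 t + TIDE τA τM A2 α n η G q.2)|
          ≤ |TRI n ζ G p.1 t - TRI n ζ G q.1 t|
            + |TIDE τA τM A2 α n η G p.2 - TIDE τA τM A2 α n η G q.2| := by
        have hsp : (TRI n ζ G p.1 t + TIDE τA τM A2 α n η G p.2)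
                - (TRI n ζ G q.1 t + TIDE τA τM A2 α n η G q.2)
              = (TRI n ζ G p.1 t - TRI n ζ G q.1 t)
                + (TIDE τA τM A2 α n η G p.2 - TIDE τA τM A2 α n η G q.2) := by ring
        rw [hsp]
        exact abs_add_le _ _
      have hb1 := TRI_lip (G := G) (n := n) hζ t p.1 q.1
      have hb2 := TIDE_lip (G := G) hτA hτM hα0 hα1 hn hη hρ0 hL0 hLf p.2 q.2 hp2 hq2
      have hm1 := mul_le_mul_of_nonneg_left e1 hKT
      have hm2 := mul_le_mul_of_nonneg_left e2 hKD
      rw [← hKTdef] at hb1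
      rw [← hKDdef] at hb2
      nlinarith [abs_nonneg (p.1 - q.1), abs_nonneg (p.2 - q.2)]
  have hmem1 : ∀ t ∈ Set.Ioo ((a + min t₀ T)/2) ((max t₀ T + b)/2),
      (θ₁ t, θ₁' t) ∈ Metric.closedBall (0 : ℝ × ℝ) ρ := fun t ht =>
    mem_closedBall_zero_iff.mpr ((hC₁ t (Ioo_subset_Icc_self ht)).trans
      (le_trans (le_max_left _ _) (le_max_left _ _)))
  have hmem2 : ∀ t ∈ Set.Ioo ((a + min t₀ T)/2) ((max t₀ T + b)/2),
      (θ₂ t, θ₂' t) ∈ Metric.closedBall (0 : ℝ × ℝ) ρ := fun t ht =>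
    mem_closedBall_zero_iff.mpr ((hC₂ t (Ioo_subset_Icc_self ht)).trans
      (le_trans (le_max_right _ _) (le_max_left _ _)))
  have heq0 : (fun t => (θ₁ t, θ₁' t)) t₀ = (fun t => (θ₂ t, θ₂' t)) t₀ := by
    simp only [hval, hval']
  have main := ODE_solution_unique_of_mem_Ioo (fun t _ => hV t) ht₀'
    (fun t ht => ⟨(h₁ t (key t (Ioo_subset_Icc_self ht))).prodMk
        (h₁' t (key t (Ioo_subset_Icc_self ht))), hmem1 t ht⟩)
    (fun t ht => ⟨(h₂ t (key t (Ioo_subset_Icc_self ht))).prodMk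
        (h₂' t (key t (Ioo_subset_Icc_self ht))), hmem2 t ht⟩)
    heq0
  exact congrArg Prod.fst (main hT')
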